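/- arXiv:1510.02372 — 3 statements merged into one kernel-verified Lean document; each statement's English description precedes it below -/
import Mathlib

section
/- Let P^n be an n-colorable simple n-polytope with 2r vertices and define B_k(P) ⊆ F_2^{2r} as the span of indicator vectors ξ_f of codimension-k faces f. Then B_0(P) ⊆ B_1(P) ⊆ ⋯ ⊆ B_{n-1}(P), B_{n-1}(P) equals the even-weight subspace of F_2^{2r}, and B_n(P) = F_2^{2r}. -/
/-- The even-weight subspace of `𝔽₂^V`: vectors whose coordinates sum to zero. -/
def evenCode (V : Type*) [Fintype V] : Submodule (ZMod 2) (V → ZMod 2) where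
  carrier := { x | ∑ v, x v = 0 }
  add_mem' := by
    intro a b ha hb
    simp only [Set.mem_setOf_eq, Pi.add_apply, Finset.sum_add_distrib] at *
    rw [ha, hb, add_zero]
  zero_mem' := by simp
  smul_mem' := by
    intro c x hx
    simp only [Set.mem_setOf_eq, Pi.smul_apply, smul_eq_mul, ← Finset.mul_sum] at *
    rw [hx, mul_zero]

/-- An abstract (combinatorial) simple `n`-polytope, recorded by its vertex–facet
incidences: each facet is given by its vertex set. Every vertex lies on exactly `n`
facets, whose intersection is that vertex alone; codimension-`(n-1)` faces (edges)
have exactly two vertices; and the 1-skeleton (graph of vertices and edges) is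
connected. -/
structure SimplePolytope (n : ℕ) (V : Type*) [Fintype V] [DecidableEq V] where
  facets : Finset (Finset V)
  facet_nonempty : ∀ F ∈ facets, F.Nonempty
  vertex_facets_card : ∀ v : V, (facets.filter (fun F => v ∈ F)).card = n
  vertex_inf : ∀ v : V, (facets.filter (fun F => v ∈ F)).inf id = {v}
  edge_card : ∀ S ⊆ facets, S.card = n - 1 → (S.inf id).Nonempty → (S.inf id).card = 2
  connected : (SimpleGraph.fromRel (fun v w : V =>
      ∃ S ⊆ facets, S.card = n - 1 ∧ S.inf id = {v, w})).Connected

namespace SimplePolytope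

variable {n : ℕ} {V : Type*} [Fintype V] [DecidableEq V]

/-- `f` is a (nonempty) face of codimension `k`: the intersection of `k` distinct
facets (for `k = 0` the whole vertex set). -/
def IsFace (P : SimplePolytope n V) (k : ℕ) (f : Finset V) : Prop :=
  f.Nonempty ∧ ∃ S ⊆ P.facets, S.card = k ∧ f = S.inf id

/-- The indicator vector `ξ_f ∈ 𝔽₂^V` of a vertex set `f`. -/
def ind (f : Finset V) : V → ZMod 2 := fun v => if v ∈ f then 1 else 0

/-- The codimension-`k` face code `𝔅_k(P)`: the span of the indicator vectors of the
codimension-`k` faces. -/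
def faceCode (P : SimplePolytope n V) (k : ℕ) : Submodule (ZMod 2) (V → ZMod 2) :=
  Submodule.span (ZMod 2) { x | ∃ f, P.IsFace k f ∧ x = ind f }

/-- A proper coloring of the facets: intersecting facets receive distinct colors. -/
def IsProperColoring (P : SimplePolytope n V) (c : Finset V → Fin n) : Prop :=
  ∀ F ∈ P.facets, ∀ G ∈ P.facets, F ≠ G → (F ∩ G).Nonempty → c F ≠ c G

/-- `P` is `n`-colorable. -/
def Colorable (P : SimplePolytope n V) : Prop := ∃ c, P.IsProperColoring c

end SimplePolytope


namespace SimplePolytope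

variable {n : ℕ} {V : Type*} [Fintype V] [DecidableEq V]

lemma ind_mem_faceCode {P : SimplePolytope n V} {k : ℕ} {f : Finset V}
    (h : P.IsFace k f) : ind f ∈ P.faceCode k :=
  Submodule.subset_span ⟨f, h, rfl⟩

lemma ind_empty : (ind (∅ : Finset V)) = 0 := by
  funext v; simp [ind]

lemma ind_pair {v w : V} (h : v ≠ w) :
    ind ({v, w} : Finset V) = ind {v} + ind {w} := by
  funext u
  simp only [ind, Pi.add_apply, Finset.mem_insert, Finset.mem_singleton]
  by_cases h1 : u = v
  · subst h1; simp [h]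
  · by_cases h2 : u = w
    · subst h2; simp [h1]
    · simp [h1, h2]

lemma sum_smul_ind_single (x : V → ZMod 2) :
    ∑ v, x v • ind ({v} : Finset V) = x := by
  funext w
  simp only [Finset.sum_apply, Pi.smul_apply, ind, Finset.mem_singleton,
    smul_eq_mul, mul_ite, mul_one, mul_zero]
  rw [Finset.sum_ite_eq]
  simp

lemma color_facet_card {P : SimplePolytope n V} {c : Finset V → Fin n}
    (hc : P.IsProperColoring c) (v : V) (i : Fin n) :
    ((P.facets.filter (fun F => v ∈ F)).filter (fun F => c F = i)).card = 1 := by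
  set T := P.facets.filter (fun F => v ∈ F) with hT
  have hTcard : T.card = n := P.vertex_facets_card v
  have hinj : Set.InjOn c ↑T := by
    intro F hF G hG hFG
    by_contra hne
    rw [Finset.mem_coe, hT, Finset.mem_filter] at hF hG
    exact hc F hF.1 G hG.1 hne ⟨v, Finset.mem_inter.2 ⟨hF.2, hG.2⟩⟩ hFG
  have himg : T.image c = Finset.univ := by
    apply Finset.eq_univ_of_card
    rw [Finset.card_image_of_injOn hinj, hTcard, Fintype.card_fin]
  have hi : i ∈ T.image c := himg.symm ▸ Finset.mem_univ i
  obtain ⟨F, hF, hFi⟩ := Finset.mem_image.1 hi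
  rw [Finset.card_eq_one]
  refine ⟨F, ?_⟩
  ext G
  simp only [Finset.mem_filter, Finset.mem_singleton]
  constructor
  · rintro ⟨hG, hGi⟩
    exact hinj (Finset.mem_coe.2 hG) (Finset.mem_coe.2 hF) (hGi.trans hFi.symm)
  · rintro rfl; exact ⟨hF, hFi⟩

lemma ind_eq_sum_inter {P : SimplePolytope n V} {c : Finset V → Fin n}
    (hc : P.IsProperColoring c) (f : Finset V) (i : Fin n) :
    ind f = ∑ F ∈ P.facets.filter (fun F => c F = i), ind (f ∩ F) := by
  funext v
  simp only [Finset.sum_apply, ind, Finset.mem_inter]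
  by_cases hv : v ∈ f
  · simp only [hv, true_and, if_true]
    rw [Finset.sum_boole, Finset.filter_comm]
    rw [color_facet_card hc v i]
    simp
  · simp [hv]

end SimplePolytope

/-- For an `n`-colorable simple `n`-polytope `P`, the face codes form a chain
`𝔅₀(P) ⊆ 𝔅₁(P) ⊆ ⋯ ⊆ 𝔅_{n-1}(P)`, with `𝔅_{n-1}(P)` equal to the even-weight
subspace and `𝔅_n(P) = 𝔽₂^{V(P)}`. -/
theorem faceCode_chain_of_colorable {n : ℕ} {V : Type*} [Fintype V] [DecidableEq V]
    (P : SimplePolytope n V) (hcol : P.Colorable) :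
    (∀ k : ℕ, k + 1 ≤ n - 1 → P.faceCode k ≤ P.faceCode (k + 1)) ∧
    P.faceCode (n - 1) = evenCode V ∧
    P.faceCode n = ⊤:= by
  classical
  obtain ⟨c, hc⟩ := hcol
  have hV : Nonempty V := P.connected.nonempty
  -- edge indicators e_v + e_w are in the codim-(n-1) code
  set G := (SimpleGraph.fromRel (fun v w : V =>
      ∃ S ⊆ P.facets, S.card = n - 1 ∧ S.inf id = {v, w})) with hG
  have hadj : ∀ v w : V, G.Adj v w →
      SimplePolytope.ind {v} + SimplePolytope.ind {w} ∈ P.faceCode (n - 1) := by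
    intro v w h
    rw [hG, SimpleGraph.fromRel_adj] at h
    obtain ⟨hvw, hr⟩ := h
    have hface : P.IsFace (n - 1) {v, w} := by
      rcases hr with ⟨S, hS, hcard, hinf⟩ | ⟨S, hS, hcard, hinf⟩
      · exact ⟨⟨v, by simp⟩, S, hS, hcard, hinf.symm⟩
      · exact ⟨⟨v, by simp⟩, S, hS, hcard, by rw [hinf, Finset.pair_comm]⟩
    rw [← SimplePolytope.ind_pair hvw]
    exact SimplePolytope.ind_mem_faceCode hface
  have key : ∀ v w : V,
      SimplePolytope.ind {v} + SimplePolytope.ind {w} ∈ P.faceCode (n - 1) := by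
    intro v w
    obtain ⟨p⟩ := P.connected.preconnected v w
    induction p with
    | @nil a =>
      have h0 : SimplePolytope.ind {a} + SimplePolytope.ind {a}
          = (0 : V → ZMod 2) := by
        funext u; exact CharTwo.add_self_eq_zero _
      rw [h0]; exact zero_mem _
    | @cons a b d h q ih =>
      have h1 := hadj a b h
      have heq : SimplePolytope.ind {a} + SimplePolytope.ind {d}
          = (SimplePolytope.ind {a} + SimplePolytope.ind {b})
            + (SimplePolytope.ind {b} + SimplePolytope.ind {d}) := by
        funext u
        simp only [Pi.add_apply]
        rw [show (SimplePolytope.ind {a} u + SimplePolytope.ind {b} u)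
            + (SimplePolytope.ind {b} u + SimplePolytope.ind {d} u)
            = SimplePolytope.ind {a} u
              + (SimplePolytope.ind {b} u + SimplePolytope.ind {b} u)
              + SimplePolytope.ind {d} u from by ring,
          CharTwo.add_self_eq_zero, add_zero]
      rw [heq]
      exact add_mem h1 ih
  refine ⟨?_, ?_, ?_⟩
  · -- chain inclusions
    intro k hk
    apply Submodule.span_le.2
    rintro x ⟨f, ⟨hfne, S, hSsub, hScard, hfS⟩, rfl⟩
    have hkn : k < n := by omega
    have hex : ∃ i : Fin n, i ∉ S.image c := by
      by_contra h
      push_neg at h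
      have h1 : (Finset.univ : Finset (Fin n)) ⊆ S.image c := fun i _ => h i
      have h2 := Finset.card_le_card h1
      have h3 := Finset.card_image_le (f := c) (s := S)
      simp only [Finset.card_univ, Fintype.card_fin] at h2
      omega
    obtain ⟨i, hi⟩ := hex
    rw [SimplePolytope.ind_eq_sum_inter hc f i]
    apply Submodule.sum_mem
    intro F hF
    rcases Finset.mem_filter.1 hF with ⟨hFfac, hFc⟩
    by_cases hne : (f ∩ F).Nonempty
    · apply SimplePolytope.ind_mem_faceCode
      have hFS : F ∉ S := by
        intro hFS
        exact hi (hFc ▸ Finset.mem_image_of_mem c hFS)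
      refine ⟨hne, insert F S, Finset.insert_subset hFfac hSsub, ?_, ?_⟩
      · rw [Finset.card_insert_of_notMem hFS, hScard]
      · rw [Finset.inf_insert, id_eq, ← hfS, Finset.inter_comm]
        rfl
    · rw [Finset.not_nonempty_iff_eq_empty.1 hne, SimplePolytope.ind_empty]
      exact zero_mem _
  · -- faceCode (n-1) = evenCode
    apply le_antisymm
    · apply Submodule.span_le.2
      rintro x ⟨f, ⟨hfne, S, hSsub, hScard, hfS⟩, rfl⟩
      have hcard : f.card = 2 := by
        rw [hfS]
        exact P.edge_card S hSsub hScard (hfS ▸ hfne)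
      show ∑ v, SimplePolytope.ind f v = 0
      simp only [SimplePolytope.ind]
      rw [Finset.sum_boole]
      have huf : Finset.univ.filter (fun v => v ∈ f) = f := by
        ext v; simp
      rw [huf, hcard]
      decide
    · intro x hx
      have hx' : ∑ v, x v = 0 := hx
      obtain ⟨v0⟩ := hV
      have hxsum : x = ∑ v, x v • (SimplePolytope.ind {v} + SimplePolytope.ind {v0}) := by
        have h2 : ∑ v, x v • (SimplePolytope.ind {v} + SimplePolytope.ind {v0})
            = (∑ v, x v • SimplePolytope.ind {v})
              + (∑ v, x v) • SimplePolytope.ind {v0} := by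
          simp only [smul_add, Finset.sum_add_distrib, Finset.sum_smul]
        rw [h2, SimplePolytope.sum_smul_ind_single, hx', zero_smul, add_zero]
      rw [hxsum]
      exact Submodule.sum_mem _ fun v _ => Submodule.smul_mem _ _ (key v v0)
  · -- faceCode n = ⊤
    apply eq_top_iff.2
    intro x _
    rw [← SimplePolytope.sum_smul_ind_single x]
    apply Submodule.sum_mem
    intro v _
    apply Submodule.smul_mem
    apply SimplePolytope.ind_mem_faceCode
    exact ⟨⟨v, Finset.mem_singleton_self v⟩, P.facets.filter (fun F => v ∈ F),
      Finset.filter_subset _ _, P.vertex_facets_card v, (P.vertex_inf v).symm⟩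
end

section
/- Let P^n be a simple n-polytope with m facets. For any vertex v, pick one facet F_v containing v, and let F_1,…,F_{m-n} be the facets not containing v. Then the indicator vectors ξ_{F_v}, ξ_{F_1},…,ξ_{F_{m-n}} are linearly independent in F_2^{V(P)}; in particular dim B_1(P) ≥ m − n + 1. -/
lemma zmod2_cases (a : ZMod 2) : a = 0 ∨ a = 1 := by fin_cases a; exacts [Or.inl rfl, Or.inr rfl]

namespace SimplePolytope

variable {n : ℕ} {V : Type*} [Fintype V] [DecidableEq V]

lemma key (P : SimplePolytope n V) (v : V) (S : Finset (Finset V))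
    (hS : S ⊆ P.facets) (hv : ∀ F ∈ S, v ∉ F)
    (hsum : ∀ w : V, ∑ F ∈ S, ind F w = 0) : S = ∅ := by
  by_contra hne
  set G := SimpleGraph.fromRel (fun v w : V =>
      ∃ T ⊆ P.facets, T.card = n - 1 ∧ T.inf id = {v, w}) with hG
  set W := S.biUnion id with hW
  have hWne : W.Nonempty := by
    obtain ⟨F0, hF0⟩ := Finset.nonempty_iff_ne_empty.2 hne
    obtain ⟨w0, hw0⟩ := P.facet_nonempty F0 (hS hF0)
    exact ⟨w0, Finset.mem_biUnion.2 ⟨F0, hF0, hw0⟩⟩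
  obtain ⟨w, hwW, hwmin⟩ := Finset.exists_min_image W (fun x => G.dist v x) hWne
  obtain ⟨Fw, hFwS, hwFw⟩ := Finset.mem_biUnion.1 hwW
  have hvW : v ∉ W := fun h => by
    obtain ⟨F, hF, hvF⟩ := Finset.mem_biUnion.1 h
    exact hv F hF (by simpa using hvF)
  have hvw : v ≠ w := fun h => hvW (h ▸ hwW)
  obtain ⟨p, hp⟩ := (P.connected).exists_walk_length_eq_dist w v
  cases p with
  | nil => exact hvw rfl
  | @cons _ u _ h q =>
    have hduv : G.dist v u < G.dist v w := by
      have h1 : G.dist u v ≤ q.length := SimpleGraph.dist_le q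
      have h2 : q.length + 1 = G.dist w v := by simpa using hp
      rw [SimpleGraph.dist_comm (u := v)]
      rw [SimpleGraph.dist_comm (u := v)]
      omega
    have huW : u ∉ W := fun hu => absurd (hwmin u hu) (by omega)
    rw [SimpleGraph.fromRel_adj] at h
    obtain ⟨hne', hr⟩ := h
    have hE : ∃ E ⊆ P.facets, E.card = n - 1 ∧ w ∈ E.inf id ∧ u ∈ E.inf id := by
      rcases hr with ⟨E, hE1, hE2, hE3⟩ | ⟨E, hE1, hE2, hE3⟩
      · exact ⟨E, hE1, hE2, by rw [hE3]; exact Finset.mem_insert_self _ _,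
          by rw [hE3]; exact Finset.mem_insert_of_mem (Finset.mem_singleton_self _)⟩
      · exact ⟨E, hE1, hE2, by rw [hE3]; exact Finset.mem_insert_of_mem (Finset.mem_singleton_self _),
          by rw [hE3]; exact Finset.mem_insert_self _ _⟩
    obtain ⟨E, hEfac, hEcard, hwE, huE⟩ := hE
    have hmemE : ∀ F ∈ E, w ∈ F ∧ u ∈ F := by
      intro F hF
      have hle := Finset.inf_le hF (f := (id : Finset V → Finset V))
      exact ⟨hle hwE, hle huE⟩
    set T := P.facets.filter (fun F => w ∈ F) with hT
    have hTcard : T.card = n := P.vertex_facets_card w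
    have hn : 1 ≤ n := by
      rw [← hTcard]
      exact Finset.card_pos.2 ⟨Fw, Finset.mem_filter.2 ⟨hS hFwS, hwFw⟩⟩
    have hET : E ⊆ T := fun F hF =>
      Finset.mem_filter.2 ⟨hEfac hF, (hmemE F hF).1⟩
    have hTE : (T \ E).card = 1 := by
      rw [Finset.card_sdiff_of_subset hET, hTcard, hEcard]; omega
    have hsub : S.filter (fun F => w ∈ F) ⊆ T \ E := by
      intro F hF
      rw [Finset.mem_filter] at hF
      refine Finset.mem_sdiff.2 ⟨Finset.mem_filter.2 ⟨hS hF.1, hF.2⟩, fun hFE => ?_⟩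
      exact huW (Finset.mem_biUnion.2 ⟨F, hF.1, (hmemE F hFE).2⟩)
    have hcard1 : (S.filter (fun F => w ∈ F)).card = 1 := by
      refine le_antisymm (hTE ▸ Finset.card_le_card hsub) ?_
      exact Finset.card_pos.2 ⟨Fw, Finset.mem_filter.2 ⟨hFwS, hwFw⟩⟩
    have := hsum w
    rw [show (∑ F ∈ S, ind F w) = ((S.filter (fun F => w ∈ F)).card : ZMod 2) by
      simp [ind, Finset.sum_boole]] at this
    rw [hcard1] at this
    exact one_ne_zero this

end SimplePolytope

/-- Let `P` be a simple `n`-polytope with `m` facets and `v` a vertex. Pick a facet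
`F_v` containing `v`; then the indicator vectors of `F_v` and of all facets not
containing `v` are linearly independent; in particular `dim 𝔅₁(P) ≥ m - n + 1`. -/
theorem facet_indicators_linearIndependent {n : ℕ} {V : Type*} [Fintype V]
    [DecidableEq V] (P : SimplePolytope n V) (v : V) (Fv : Finset V)
    (hFv : Fv ∈ P.facets) (hvFv : v ∈ Fv) :
    LinearIndependent (ZMod 2)
      (fun o : Option {F : Finset V // F ∈ P.facets ∧ v ∉ F} =>
        o.elim (SimplePolytope.ind Fv) (fun F => SimplePolytope.ind F.1)) ∧
    P.facets.card - n + 1 ≤ Module.finrank (ZMod 2) (P.faceCode 1) := by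
  set ι := {F : Finset V // F ∈ P.facets ∧ v ∉ F} with hι
  set f : Option ι → V → ZMod 2 :=
    (fun o : Option ι =>
      o.elim (SimplePolytope.ind Fv) (fun F => SimplePolytope.ind F.1)) with hf
  have hli : LinearIndependent (ZMod 2) f := by
    rw [Fintype.linearIndependent_iff]
    intro g hg
    have hpt : ∀ w : V, g none • SimplePolytope.ind Fv w
        + ∑ F : ι, g (some F) • SimplePolytope.ind F.1 w = 0 := by
      intro w
      have := congrFun hg w
      simpa [f, Fintype.sum_option, Finset.sum_apply] using this
    have hgnone : g none = 0 := by
      have := hpt v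
      have h0 : ∀ F : ι, SimplePolytope.ind F.1 v = 0 := fun F => if_neg F.2.2
      simp only [h0, smul_zero, Finset.sum_const_zero, add_zero] at this
      simpa [SimplePolytope.ind, hvFv] using this
    set S : Finset (Finset V) :=
      (Finset.univ.filter (fun F : ι => g (some F) ≠ 0)).image Subtype.val with hSdef
    have hSsub : S ⊆ P.facets := by
      intro F hF
      obtain ⟨F', _, rfl⟩ := Finset.mem_image.1 hF
      exact F'.2.1
    have hSv : ∀ F ∈ S, v ∉ F := by
      intro F hF
      obtain ⟨F', _, rfl⟩ := Finset.mem_image.1 hF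
      exact F'.2.2
    have hsum : ∀ w : V, ∑ F ∈ S, SimplePolytope.ind F w = 0 := by
      intro w
      have h1 : ∑ F ∈ S, SimplePolytope.ind F w
          = ∑ F ∈ Finset.univ.filter (fun F : ι => g (some F) ≠ 0),
              SimplePolytope.ind F.1 w := by
        rw [hSdef, Finset.sum_image (fun a _ b _ h => Subtype.ext h)]
      have h2 : ∑ F ∈ Finset.univ.filter (fun F : ι => g (some F) ≠ 0),
            SimplePolytope.ind F.1 w
          = ∑ F : ι, g (some F) • SimplePolytope.ind F.1 w := by
        rw [Finset.sum_filter]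
        refine Finset.sum_congr rfl fun F _ => ?_
        rcases zmod2_cases (g (some F)) with h | h
        · simp [h]
        · simp [h]
      have := hpt w
      rw [hgnone, zero_smul, zero_add] at this
      rw [h1, h2, this]
    have hSempty := P.key v S hSsub hSv hsum
    intro o
    match o with
    | none => exact hgnone
    | some F =>
      by_contra hne
      have : F.1 ∈ S := Finset.mem_image.2 ⟨F, Finset.mem_filter.2 ⟨Finset.mem_univ _, hne⟩, rfl⟩
      rw [hSempty] at this
      exact absurd this (Finset.notMem_empty _)
  refine ⟨hli, ?_⟩
  have hspan : Submodule.span (ZMod 2) (Set.range f) ≤ P.faceCode 1 := by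
    rw [Submodule.span_le]
    rintro x ⟨o, rfl⟩
    apply Submodule.subset_span
    match o with
    | none =>
      exact ⟨Fv, ⟨P.facet_nonempty Fv hFv, {Fv}, Finset.singleton_subset_iff.2 hFv,
        Finset.card_singleton _, (Finset.inf_singleton (f := id)).symm⟩, rfl⟩
    | some F =>
      exact ⟨F.1, ⟨P.facet_nonempty F.1 F.2.1, {F.1}, Finset.singleton_subset_iff.2 F.2.1,
        Finset.card_singleton _, (Finset.inf_singleton (f := id)).symm⟩, rfl⟩
  have hrank : Module.finrank (ZMod 2) (Submodule.span (ZMod 2) (Set.range f))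
      = Fintype.card (Option ι) := finrank_span_eq_card hli
  have hmono := Submodule.finrank_mono hspan
  have hcardι : Fintype.card ι = (P.facets.filter (fun F => v ∉ F)).card := by
    rw [Fintype.card_subtype]
    congr 1
    ext F
    simp [and_comm]
  have hfilters : (P.facets.filter (fun F => v ∈ F)).card
      + (P.facets.filter (fun F => v ∉ F)).card = P.facets.card :=
    Finset.card_filter_add_card_filter_not _
  have hn := P.vertex_facets_card v
  have hcardO : Fintype.card (Option ι) = (P.facets.filter (fun F => v ∉ F)).card + 1 := by
    rw [Fintype.card_option, hcardι]
  omega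
end

section
/- Every n-dimensional even polytope (n-colorable simple n-polytope) has at least 2^n vertices, with equality if and only if it is combinatorially the n-cube. -/
namespace SimplePolytope

variable {n : ℕ} {V : Type*} [Fintype V] [DecidableEq V]

variable (P : SimplePolytope n V)

/-- facets through `v` -/
def N (v : V) : Finset (Finset V) := P.facets.filter (fun F => v ∈ F)

lemma card_N (v : V) : (P.N v).card = n := P.vertex_facets_card v
lemma inf_N (v : V) : (P.N v).inf id = {v} := P.vertex_inf v
lemma mem_N {v : V} {F : Finset V} : F ∈ P.N v ↔ F ∈ P.facets ∧ v ∈ F := by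
  simp [N]

variable {c : Finset V → Fin n}

lemma injOn_c (hc : P.IsProperColoring c) (v : V) :
    Set.InjOn c (P.N v : Set (Finset V)) := by
  intro F hF G hG h
  by_contra hne
  have hF' := (P.mem_N.1 hF); have hG' := (P.mem_N.1 hG)
  exact hc F hF'.1 G hG'.1 hne ⟨v, Finset.mem_inter.2 ⟨hF'.2, hG'.2⟩⟩ h

lemma exists_unique_Fc (hc : P.IsProperColoring c) (v : V) (i : Fin n) :
    ∃! F, F ∈ P.N v ∧ c F = i := by
  have himg : (P.N v).image c = Finset.univ := by
    apply Finset.eq_univ_of_card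
    rw [Finset.card_image_of_injOn (P.injOn_c hc v), P.card_N, Fintype.card_fin]
  have : i ∈ (P.N v).image c := by rw [himg]; exact Finset.mem_univ i
  obtain ⟨F, hF, hFi⟩ := Finset.mem_image.1 this
  exact ⟨F, ⟨hF, hFi⟩, fun G hG => P.injOn_c hc v hG.1 hF (hG.2.trans hFi.symm)⟩

/-- the unique facet of color `i` through `v` -/
noncomputable def Fc (hc : P.IsProperColoring c) (v : V) (i : Fin n) : Finset V :=
  Finset.choose (fun F => c F = i) (P.N v) (P.exists_unique_Fc hc v i)

variable (hc : P.IsProperColoring c)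

lemma Fc_mem_N (v : V) (i : Fin n) : P.Fc hc v i ∈ P.N v := Finset.choose_mem _ _ _
lemma c_Fc (v : V) (i : Fin n) : c (P.Fc hc v i) = i :=
  Finset.choose_property (fun F => c F = i) (P.N v) (P.exists_unique_Fc hc v i)
lemma mem_Fc (v : V) (i : Fin n) : v ∈ P.Fc hc v i := (P.mem_N.1 (P.Fc_mem_N hc v i)).2
lemma Fc_mem_facets (v : V) (i : Fin n) : P.Fc hc v i ∈ P.facets :=
  (P.mem_N.1 (P.Fc_mem_N hc v i)).1

lemma eq_Fc {v : V} {i : Fin n} {F : Finset V} (hF : F ∈ P.N v) (hFi : c F = i) :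
    F = P.Fc hc v i :=
  (P.exists_unique_Fc hc v i).unique ⟨hF, hFi⟩ ⟨P.Fc_mem_N hc v i, P.c_Fc hc v i⟩

lemma eq_Fc' {v : V} {F : Finset V} (hF : F ∈ P.facets) (hv : v ∈ F) :
    F = P.Fc hc v (c F) := P.eq_Fc hc (P.mem_N.2 ⟨hF, hv⟩) rfl

/-- if `v` belongs to a color-`i` facet based elsewhere, it is `v`'s color-`i` facet -/
lemma Fc_eq_of_mem {v w : V} {i : Fin n} (h : v ∈ P.Fc hc w i) :
    P.Fc hc w i = P.Fc hc v i :=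
  P.eq_Fc hc (P.mem_N.2 ⟨P.Fc_mem_facets hc w i, h⟩) (P.c_Fc hc w i)

end SimplePolytope

namespace SimplePolytope

variable {n : ℕ} {V : Type*} [Fintype V] [DecidableEq V]
variable (P : SimplePolytope n V) {c : Finset V → Fin n} (hc : P.IsProperColoring c)

/-- the `n-1` facets through `v` omitting the color-`i` one -/
noncomputable def Sf (v : V) (i : Fin n) : Finset (Finset V) :=
  (P.N v).erase (P.Fc hc v i)

lemma card_Sf (v : V) (i : Fin n) : (P.Sf hc v i).card = n - 1 := by
  rw [Sf, Finset.card_erase_of_mem (P.Fc_mem_N hc v i), P.card_N]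

lemma Sf_subset (v : V) (i : Fin n) : P.Sf hc v i ⊆ P.facets :=
  (Finset.erase_subset _ _).trans (fun F hF => (P.mem_N.1 hF).1)

lemma mem_of_mem_Sf {v : V} {i : Fin n} {F : Finset V} (h : F ∈ P.Sf hc v i) : v ∈ F :=
  (P.mem_N.1 (Finset.mem_of_mem_erase h)).2

lemma c_ne_of_mem_Sf {v : V} {i : Fin n} {F : Finset V} (h : F ∈ P.Sf hc v i) :
    c F ≠ i := by
  intro hci
  exact (Finset.ne_of_mem_erase h) (P.eq_Fc hc (Finset.mem_of_mem_erase h) hci)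

lemma mem_inf_Sf (v : V) (i : Fin n) : v ∈ (P.Sf hc v i).inf id := by
  simp only [Finset.mem_inf, id]
  exact fun F hF => P.mem_of_mem_Sf hc hF

lemma card_inf_Sf (v : V) (i : Fin n) : ((P.Sf hc v i).inf id).card = 2 :=
  P.edge_card _ (P.Sf_subset hc v i) (P.card_Sf hc v i) ⟨v, P.mem_inf_Sf hc v i⟩

lemma exists_sig (v : V) (i : Fin n) :
    ∃ w, w ≠ v ∧ (P.Sf hc v i).inf id = {v, w} := by
  have h2 := P.card_inf_Sf hc v i
  have hv := P.mem_inf_Sf hc v i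
  obtain ⟨a, b, hab, hset⟩ := Finset.card_eq_two.1 h2
  rw [hset] at hv
  rcases Finset.mem_insert.1 hv with h | h
  · subst h; exact ⟨b, hab.symm, hset⟩
  · have hb : v = b := Finset.mem_singleton.1 h
    subst hb
    exact ⟨a, hab, by rw [hset, Finset.pair_comm]⟩

/-- the flip of `v` along the edge keeping all colors except `i` -/
noncomputable def sig (v : V) (i : Fin n) : V := (P.exists_sig hc v i).choose

lemma sig_ne (v : V) (i : Fin n) : P.sig hc v i ≠ v := (P.exists_sig hc v i).choose_spec.1

lemma inf_Sf (v : V) (i : Fin n) : (P.Sf hc v i).inf id = {v, P.sig hc v i} :=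
  (P.exists_sig hc v i).choose_spec.2

lemma sig_mem_of_mem_Sf {v : V} {i : Fin n} {F : Finset V} (h : F ∈ P.Sf hc v i) :
    P.sig hc v i ∈ F := by
  have h1 : P.sig hc v i ∈ (P.Sf hc v i).inf id := by
    rw [P.inf_Sf hc v i]; exact Finset.mem_insert_of_mem (Finset.mem_singleton_self _)
  rw [Finset.mem_inf] at h1
  exact h1 F h

lemma sig_notMem_Fc (v : V) (i : Fin n) : P.sig hc v i ∉ P.Fc hc v i := by
  intro h
  have hmem : P.sig hc v i ∈ (P.N v).inf id := by
    simp only [Finset.mem_inf, id]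
    intro F hF
    rcases eq_or_ne F (P.Fc hc v i) with rfl | hne
    · exact h
    · exact P.sig_mem_of_mem_Sf hc (Finset.mem_erase.2 ⟨hne, hF⟩)
  rw [P.inf_N] at hmem
  exact P.sig_ne hc v i (Finset.mem_singleton.1 hmem)

lemma Sf_subset_N_sig (v : V) (i : Fin n) : P.Sf hc v i ⊆ P.N (P.sig hc v i) :=
  fun F hF => P.mem_N.2 ⟨P.Sf_subset hc v i hF, P.sig_mem_of_mem_Sf hc hF⟩

lemma N_sig (v : V) (i : Fin n) :
    P.N (P.sig hc v i) = insert (P.Fc hc (P.sig hc v i) i) (P.Sf hc v i) := by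
  set w := P.sig hc v i
  have hFw : P.Fc hc w i ∉ P.Sf hc v i := fun h => P.c_ne_of_mem_Sf hc h (P.c_Fc hc w i)
  have hsub : insert (P.Fc hc w i) (P.Sf hc v i) ⊆ P.N w := by
    intro F hF
    rcases Finset.mem_insert.1 hF with rfl | h
    · exact P.Fc_mem_N hc w i
    · exact P.Sf_subset_N_sig hc v i h
  refine (Finset.eq_of_subset_of_card_le hsub ?_).symm
  rw [Finset.card_insert_of_notMem hFw, P.card_Sf, P.card_N]
  have hn : 1 ≤ n := i.pos
  omega

lemma Fc_sig_of_ne (v : V) {i j : Fin n} (hij : j ≠ i) :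
    P.Fc hc (P.sig hc v i) j = P.Fc hc v j := by
  have h1 : P.Fc hc v j ∈ P.Sf hc v i := by
    refine Finset.mem_erase.2 ⟨?_, P.Fc_mem_N hc v j⟩
    intro h
    exact hij (by rw [← P.c_Fc hc v j, h, P.c_Fc hc v i])
  exact (P.eq_Fc hc (P.Sf_subset_N_sig hc v i h1) (P.c_Fc hc v j)).symm

lemma Sf_sig (v : V) (i : Fin n) : P.Sf hc (P.sig hc v i) i = P.Sf hc v i := by
  have hFw : P.Fc hc (P.sig hc v i) i ∉ P.Sf hc v i :=
    fun h => P.c_ne_of_mem_Sf hc h (P.c_Fc hc _ i)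
  rw [Sf, P.N_sig hc v i, Finset.erase_insert hFw]

lemma sig_sig (v : V) (i : Fin n) : P.sig hc (P.sig hc v i) i = v := by
  set w := P.sig hc v i with hw
  have h1 : (P.Sf hc w i).inf id = {v, w} := by rw [P.Sf_sig hc v i]; exact P.inf_Sf hc v i
  have h2 : (P.Sf hc w i).inf id = {w, P.sig hc w i} := P.inf_Sf hc w i
  have h3 : P.sig hc w i ∈ ({v, w} : Finset V) := by
    rw [← h1, h2]; exact Finset.mem_insert_of_mem (Finset.mem_singleton_self _)
  rcases Finset.mem_insert.1 h3 with h | h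
  · exact h
  · exact absurd (Finset.mem_singleton.1 h) (P.sig_ne hc w i)

end SimplePolytope

namespace SimplePolytope

variable {n : ℕ} {V : Type*} [Fintype V] [DecidableEq V]
variable (P : SimplePolytope n V) {c : Finset V → Fin n} (hc : P.IsProperColoring c)

/-- the face of `v0` spanned by colors outside `A` -/
noncomputable def Face (v0 : V) (A : Finset (Fin n)) : Finset V := A.inf (P.Fc hc v0)

lemma mem_Face {v0 v : V} {A : Finset (Fin n)} :
    v ∈ P.Face hc v0 A ↔ ∀ i ∈ A, v ∈ P.Fc hc v0 i := by
  simp [Face, Finset.mem_inf]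

lemma self_mem_Face (v0 : V) (A : Finset (Fin n)) : v0 ∈ P.Face hc v0 A :=
  (P.mem_Face hc).2 fun i _ => P.mem_Fc hc v0 i

lemma Face_univ (v0 : V) : P.Face hc v0 Finset.univ = {v0} := by
  have himg : Finset.univ.image (P.Fc hc v0) = P.N v0 := by
    apply Finset.eq_of_subset_of_card_le
    · intro F hF
      obtain ⟨i, _, rfl⟩ := Finset.mem_image.1 hF
      exact P.Fc_mem_N hc v0 i
    · rw [P.card_N, Finset.card_image_of_injective _ (fun i j hij => by
        rw [← P.c_Fc hc v0 i, hij, P.c_Fc hc v0 j]), Finset.card_univ, Fintype.card_fin]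
  have : P.Face hc v0 Finset.univ = (P.N v0).inf id := by
    rw [← himg, Finset.inf_image]
    rfl
  rw [this, P.inf_N]

lemma Face_subset_of_subset (v0 : V) {A B : Finset (Fin n)} (h : A ⊆ B) :
    P.Face hc v0 B ⊆ P.Face hc v0 A := Finset.le_iff_subset.1 (Finset.inf_mono h)

lemma Face_subset_Fc {v0 : V} {A : Finset (Fin n)} {i : Fin n} (hi : i ∈ A) :
    P.Face hc v0 A ⊆ P.Fc hc v0 i :=
  fun _ hv => (P.mem_Face hc).1 hv i hi

lemma sig_mem_Face {v0 v : V} {A : Finset (Fin n)} {i : Fin n} (hi : i ∉ A)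
    (hv : v ∈ P.Face hc v0 (insert i A)) :
    P.sig hc v i ∈ P.Face hc v0 A ∧ P.sig hc v i ∉ P.Fc hc v0 i := by
  have hvi : v ∈ P.Fc hc v0 i :=
    (P.mem_Face hc).1 hv i (Finset.mem_insert_self i A)
  have hFi : P.Fc hc v0 i = P.Fc hc v i := P.Fc_eq_of_mem hc hvi
  constructor
  · refine (P.mem_Face hc).2 fun j hj => ?_
    have hji : j ≠ i := fun h => hi (h ▸ hj)
    have hvj : v ∈ P.Fc hc v0 j :=
      (P.mem_Face hc).1 hv j (Finset.mem_insert_of_mem hj)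
    rw [P.Fc_eq_of_mem hc hvj, ← P.Fc_sig_of_ne hc v hji]
    exact P.mem_Fc hc _ j
  · rw [hFi]
    exact P.sig_notMem_Fc hc v i

lemma two_mul_card_Face_le (v0 : V) {A : Finset (Fin n)} {i : Fin n} (hi : i ∉ A) :
    2 * (P.Face hc v0 (insert i A)).card ≤ (P.Face hc v0 A).card := by
  set T := P.Face hc v0 (insert i A)
  set T' := T.image (fun v => P.sig hc v i)
  have hinj : Set.InjOn (fun v => P.sig hc v i) T := by
    intro x hx y hy hxy
    have := congrArg (fun z => P.sig hc z i) hxy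
    simpa only [P.sig_sig hc] using this
  have hcard : T'.card = T.card := Finset.card_image_of_injOn hinj
  have hT : T ⊆ P.Face hc v0 A := P.Face_subset_of_subset hc v0 (Finset.subset_insert i A)
  have hT' : T' ⊆ P.Face hc v0 A := by
    intro x hx
    obtain ⟨v, hv, rfl⟩ := Finset.mem_image.1 hx
    exact (P.sig_mem_Face hc hi hv).1
  have hdisj : Disjoint T T' := by
    rw [Finset.disjoint_right]
    intro x hx
    obtain ⟨v, hv, rfl⟩ := Finset.mem_image.1 hx
    intro hxT
    exact (P.sig_mem_Face hc hi hv).2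
      (P.Face_subset_Fc hc (Finset.mem_insert_self i A) hxT)
  calc 2 * T.card = T.card + T'.card := by omega
    _ = (T ∪ T').card := (Finset.card_union_of_disjoint hdisj).symm
    _ ≤ (P.Face hc v0 A).card := Finset.card_le_card (Finset.union_subset hT hT')

lemma two_pow_le_card_Face (v0 : V) :
    ∀ (k : ℕ) (A : Finset (Fin n)), n - A.card ≤ k →
      2 ^ (n - A.card) ≤ (P.Face hc v0 A).card := by
  intro k
  induction k with
  | zero =>
    intro A hA
    rw [Nat.le_zero.1 hA, pow_zero]
    exact Finset.card_pos.2 ⟨v0, P.self_mem_Face hc v0 A⟩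
  | succ k ih =>
    intro A hA
    rcases Nat.eq_zero_or_pos (n - A.card) with h0 | hpos
    · rw [h0, pow_zero]
      exact Finset.card_pos.2 ⟨v0, P.self_mem_Face hc v0 A⟩
    · have hAn : A.card < n := by omega
      have : A ≠ Finset.univ := by
        intro h
        rw [h, Finset.card_univ, Fintype.card_fin] at hAn
        omega
      obtain ⟨i, hi⟩ : ∃ i, i ∉ A := by
        by_contra h
        push_neg at h
        exact this (Finset.eq_univ_of_forall h)
      have hcard : (insert i A).card = A.card + 1 := Finset.card_insert_of_notMem hi
      have hstep : n - (insert i A).card ≤ k := by omega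
      have h1 := ih (insert i A) hstep
      have h2 := P.two_mul_card_Face_le hc v0 hi
      have : 2 ^ (n - A.card) = 2 * 2 ^ (n - (insert i A).card) := by
        rw [hcard]
        rw [← pow_succ']
        congr 1
        omega
      rw [this]
      calc 2 * 2 ^ (n - (insert i A).card) ≤ 2 * (P.Face hc v0 (insert i A)).card :=
            Nat.mul_le_mul_left 2 h1
        _ ≤ _ := h2

lemma card_Face_mul_le (v0 : V) (A : Finset (Fin n)) :
    2 ^ A.card * (P.Face hc v0 A).card ≤ Fintype.card V := by
  induction A using Finset.induction_on with
  | empty =>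
    simp only [Finset.card_empty, pow_zero, one_mul, Face, Finset.inf_empty]
    rw [Finset.top_eq_univ, Finset.card_univ]
  | @insert i A hi ih =>
    rw [Finset.card_insert_of_notMem hi]
    calc 2 ^ (A.card + 1) * (P.Face hc v0 (insert i A)).card
        = 2 ^ A.card * (2 * (P.Face hc v0 (insert i A)).card) := by ring
      _ ≤ 2 ^ A.card * (P.Face hc v0 A).card :=
          Nat.mul_le_mul_left _ (P.two_mul_card_Face_le hc v0 hi)
      _ ≤ Fintype.card V := ih

lemma two_pow_le_card (hpc : P.IsProperColoring c) (v0 : V) : 2 ^ n ≤ Fintype.card V := by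
  have h := P.two_pow_le_card_Face hpc v0 n ∅ (by simp)
  have : P.Face hpc v0 ∅ = Finset.univ := by
    simp [Face, Finset.inf_empty, Finset.top_eq_univ]
  rw [this, Finset.card_univ] at h
  simpa using h
end SimplePolytope

namespace SimplePolytope

variable {n : ℕ} {V : Type*} [Fintype V] [DecidableEq V]
variable (P : SimplePolytope n V) {c : Finset V → Fin n} (hc : P.IsProperColoring c)

lemma card_Face_eq (hcard : Fintype.card V = 2 ^ n) (v0 : V) (A : Finset (Fin n)) :
    (P.Face hc v0 A).card = 2 ^ (n - A.card) := by
  have hAn : A.card ≤ n := by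
    have := Finset.card_le_card (Finset.subset_univ A)
    rwa [Finset.card_univ, Fintype.card_fin] at this
  have h1 := P.two_pow_le_card_Face hc v0 n A (by omega)
  have h2 := P.card_Face_mul_le hc v0 A
  rw [hcard] at h2
  have hpow : 2 ^ A.card * 2 ^ (n - A.card) = 2 ^ n := by
    rw [← pow_add]; congr 1; omega
  refine le_antisymm ?_ h1
  have := hpow ▸ h2
  exact Nat.le_of_mul_le_mul_left this (by positivity)

lemma Face_decomp (hcard : Fintype.card V = 2 ^ n) (v0 : V) {A : Finset (Fin n)}
    {i : Fin n} (hi : i ∉ A) :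
    P.Face hc v0 A =
      P.Face hc v0 (insert i A) ∪
        (P.Face hc v0 (insert i A)).image (fun v => P.sig hc v i) := by
  set T := P.Face hc v0 (insert i A) with hT
  set T' := T.image (fun v => P.sig hc v i) with hT'
  have hsub : T ∪ T' ⊆ P.Face hc v0 A := by
    refine Finset.union_subset
      (P.Face_subset_of_subset hc v0 (Finset.subset_insert i A)) ?_
    intro x hx
    obtain ⟨v, hv, rfl⟩ := Finset.mem_image.1 hx
    exact (P.sig_mem_Face hc hi hv).1
  have hinj : Set.InjOn (fun v => P.sig hc v i) T := by
    intro x hx y hy hxy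
    have := congrArg (fun z => P.sig hc z i) hxy
    simpa only [P.sig_sig hc] using this
  have hdisj : Disjoint T T' := by
    rw [Finset.disjoint_right]
    intro x hx
    obtain ⟨v, hv, rfl⟩ := Finset.mem_image.1 hx
    intro hxT
    exact (P.sig_mem_Face hc hi hv).2
      (P.Face_subset_Fc hc (Finset.mem_insert_self i A) hxT)
  have hAn : A.card < n := by
    have := Finset.card_le_card (Finset.subset_univ (insert i A))
    rw [Finset.card_univ, Fintype.card_fin, Finset.card_insert_of_notMem hi] at this
    omega
  have hcardU : (T ∪ T').card = (P.Face hc v0 A).card := by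
    rw [Finset.card_union_of_disjoint hdisj, Finset.card_image_of_injOn hinj,
      P.card_Face_eq hc hcard v0, P.card_Face_eq hc hcard v0,
      Finset.card_insert_of_notMem hi]
    have : n - A.card = (n - (A.card + 1)) + 1 := by omega
    rw [this, pow_succ]
    ring
  exact (Finset.eq_of_subset_of_card_le hsub (le_of_eq hcardU.symm)).symm

lemma sig_pattern (hcard : Fintype.card V = 2 ^ n) (v0 : V) {v : V} {i : Fin n}
    (hvi : v ∉ P.Fc hc v0 i) :
    ∀ j, P.sig hc v i ∈ P.Fc hc v0 j ↔ (j = i ∨ v ∈ P.Fc hc v0 j) := by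
  classical
  set A := Finset.univ.filter (fun j => v ∈ P.Fc hc v0 j) with hA
  have hiA : i ∉ A := by simp [hA, hvi]
  have hvA : v ∈ P.Face hc v0 A :=
    (P.mem_Face hc).2 (fun j hj => (Finset.mem_filter.1 hj).2)
  have hdec := P.Face_decomp hc hcard v0 hiA
  rw [hdec] at hvA
  have hvT : v ∉ P.Face hc v0 (insert i A) :=
    fun h => hvi (P.Face_subset_Fc hc (Finset.mem_insert_self i A) h)
  have hvT' : v ∈ (P.Face hc v0 (insert i A)).image (fun v => P.sig hc v i) := by
    rcases Finset.mem_union.1 hvA with h | h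
    · exact absurd h hvT
    · exact h
  obtain ⟨u, hu, huv⟩ := Finset.mem_image.1 hvT'
  have hsv : P.sig hc v i = u := by
    rw [← huv, P.sig_sig hc]
  intro j
  constructor
  · intro h
    rcases eq_or_ne j i with rfl | hji
    · exact Or.inl rfl
    · right
      by_contra hvj
      have h1 : P.Fc hc v0 j = P.Fc hc (P.sig hc v i) j := P.Fc_eq_of_mem hc h
      rw [P.Fc_sig_of_ne hc v hji] at h1
      exact hvj (h1 ▸ P.mem_Fc hc v j)
  · intro h
    rw [hsv]
    rcases h with rfl | h
    · exact P.Face_subset_Fc hc (Finset.mem_insert_self j A) hu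
    · have hjA : j ∈ A := by simp [hA, h]
      exact P.Face_subset_Fc hc (Finset.mem_insert_of_mem hjA) hu

lemma pattern_inj (hcard : Fintype.card V = 2 ^ n) (v0 : V) :
    ∀ (k : ℕ) (v w : V),
      (Finset.univ.filter (fun i => v ∉ P.Fc hc v0 i)).card ≤ k →
      (∀ i, v ∈ P.Fc hc v0 i ↔ w ∈ P.Fc hc v0 i) → v = w := by
  intro k
  induction k with
  | zero =>
    intro v w hcardf hiff
    have hv : ∀ i, v ∈ P.Fc hc v0 i := by
      intro i
      by_contra h
      have : i ∈ Finset.univ.filter (fun i => v ∉ P.Fc hc v0 i) := by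
        simp [h]
      have := Finset.card_pos.2 ⟨i, this⟩
      omega
    have hvv : v ∈ P.Face hc v0 Finset.univ :=
      (P.mem_Face hc).2 (fun i _ => hv i)
    have hww : w ∈ P.Face hc v0 Finset.univ :=
      (P.mem_Face hc).2 (fun i _ => (hiff i).1 (hv i))
    rw [P.Face_univ hc v0] at hvv hww
    rw [Finset.mem_singleton.1 hvv, Finset.mem_singleton.1 hww]
  | succ k ih =>
    intro v w hcardf hiff
    rcases Nat.eq_zero_or_pos (Finset.univ.filter (fun i => v ∉ P.Fc hc v0 i)).card
      with h0 | hpos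
    · exact ih v w (by omega) hiff
    · obtain ⟨i, hi⟩ := Finset.card_pos.1 hpos
      have hvi : v ∉ P.Fc hc v0 i := (Finset.mem_filter.1 hi).2
      have hwi : w ∉ P.Fc hc v0 i := fun h => hvi ((hiff i).2 h)
      have hv' := P.sig_pattern hc hcard v0 hvi
      have hw' := P.sig_pattern hc hcard v0 hwi
      have hiff' : ∀ j, P.sig hc v i ∈ P.Fc hc v0 j ↔ P.sig hc w i ∈ P.Fc hc v0 j := by
        intro j
        rw [hv' j, hw' j, hiff j]
      have hfilt : Finset.univ.filter (fun j => P.sig hc v i ∉ P.Fc hc v0 j) =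
          (Finset.univ.filter (fun j => v ∉ P.Fc hc v0 j)).erase i := by
        ext j
        simp only [Finset.mem_filter, Finset.mem_erase, Finset.mem_univ, true_and,
          hv' j]
        constructor
        · intro h
          push_neg at h
          exact ⟨h.1, h.2⟩
        · intro ⟨h1, h2⟩
          push_neg
          exact ⟨h1, h2⟩
      have hcard' : (Finset.univ.filter (fun j => P.sig hc v i ∉ P.Fc hc v0 j)).card ≤ k := by
        rw [hfilt, Finset.card_erase_of_mem hi]
        omega
      have := ih (P.sig hc v i) (P.sig hc w i) hcard' hiff'
      have h2 := congrArg (fun z => P.sig hc z i) this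
      simpa only [P.sig_sig hc] using h2

end SimplePolytope

namespace SimplePolytope

variable {n : ℕ} {V : Type*} [Fintype V] [DecidableEq V]
variable (P : SimplePolytope n V) {c : Finset V → Fin n} (hc : P.IsProperColoring c)

lemma Face_singleton (v0 : V) (i : Fin n) : P.Face hc v0 {i} = P.Fc hc v0 i := by
  simp [Face]

lemma card_Fc_eq (hcard : Fintype.card V = 2 ^ n) (v0 : V) (i : Fin n) :
    (P.Fc hc v0 i).card = 2 ^ (n - 1) := by
  rw [← P.Face_singleton hc v0 i, P.card_Face_eq hc hcard v0, Finset.card_singleton]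

lemma two_pow_le_card_Fc (v0 : V) (i : Fin n) : 2 ^ (n - 1) ≤ (P.Fc hc v0 i).card := by
  rw [← P.Face_singleton hc v0 i]
  have := P.two_pow_le_card_Face hc v0 n {i} (by simp)
  simpa using this

lemma exists_notMem_Fc (hcard : Fintype.card V = 2 ^ n) (v0 : V) (i : Fin n) :
    ∃ w, w ∉ P.Fc hc v0 i := by
  have hn : 1 ≤ n := i.pos
  have h1 := P.card_Fc_eq hc hcard v0 i
  have hpow : 2 ^ n = 2 * 2 ^ (n - 1) := by
    rw [← pow_succ']; congr 1; omega
  have hlt : (P.Fc hc v0 i).card < Fintype.card V := by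
    rw [h1, hcard, hpow]
    have : 0 < 2 ^ (n - 1) := by positivity
    omega
  by_contra h
  push_neg at h
  have : Finset.univ ⊆ P.Fc hc v0 i := fun v _ => h v
  have := Finset.card_le_card this
  rw [Finset.card_univ] at this
  omega

lemma Fc_compl (hcard : Fintype.card V = 2 ^ n) (v0 : V) {i : Fin n} {w : V}
    (hw : w ∉ P.Fc hc v0 i) : P.Fc hc w i = (P.Fc hc v0 i)ᶜ := by
  have hn : 1 ≤ n := i.pos
  have hsub : P.Fc hc w i ⊆ (P.Fc hc v0 i)ᶜ := by
    intro u hu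
    rw [Finset.mem_compl]
    intro hu'
    have h1 : P.Fc hc w i = P.Fc hc u i := P.Fc_eq_of_mem hc hu
    have h2 : P.Fc hc v0 i = P.Fc hc u i := P.Fc_eq_of_mem hc hu'
    have h3 : P.Fc hc v0 i = P.Fc hc w i := h2.trans h1.symm
    rw [h3] at hw
    exact hw (P.mem_Fc hc w i)
  have hpow : 2 ^ n = 2 * 2 ^ (n - 1) := by
    rw [← pow_succ']; congr 1; omega
  have hcompl : (P.Fc hc v0 i)ᶜ.card = 2 ^ (n - 1) := by
    rw [Finset.card_compl, P.card_Fc_eq hc hcard v0 i, hcard, hpow]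
    omega
  refine Finset.eq_of_subset_of_card_le hsub ?_
  rw [hcompl]
  exact P.two_pow_le_card_Fc hc w i

end SimplePolytope


/-- Every `n`-dimensional even polytope (`n`-colorable simple `n`-polytope) has at
least `2^n` vertices, with equality if and only if it is combinatorially the `n`-cube
(there is a vertex bijection with `{0,1}^n` matching facets with the cube's facets). -/
theorem even_polytope_card_ge_two_pow {n : ℕ} {V : Type*} [Fintype V] [DecidableEq V]
    (P : SimplePolytope n V) (hcol : P.Colorable) :
    2 ^ n ≤ Fintype.card V ∧
    (Fintype.card V = 2 ^ n ↔
      ∃ e : V ≃ (Fin n → Bool), ∀ F : Finset V,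
        F ∈ P.facets ↔ ∃ (i : Fin n) (b : Bool),
          F.image e = Finset.univ.filter (fun x => x i = b)) := by
  classical
  obtain ⟨c, hc⟩ := hcol
  have hne : Nonempty V := P.connected.nonempty
  obtain ⟨v0⟩ := hne
  refine ⟨P.two_pow_le_card hc v0, ?_, ?_⟩
  · -- forward: card = 2^n → cube structure
    intro hcard
    set f : V → (Fin n → Bool) := fun v i => decide (v ∉ P.Fc hc v0 i) with hf
    have hfiff : ∀ v i, f v i = false ↔ v ∈ P.Fc hc v0 i := by
      intro v i
      simp [hf]
    have hfiff' : ∀ v i, f v i = true ↔ v ∉ P.Fc hc v0 i := by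
      intro v i
      simp [hf]
    have hinj : Function.Injective f := by
      intro v w h
      refine P.pattern_inj hc hcard v0 n v w ?_ ?_
      · calc (Finset.univ.filter (fun i => v ∉ P.Fc hc v0 i)).card
            ≤ Finset.univ.card := Finset.card_filter_le _ _
          _ = n := by rw [Finset.card_univ, Fintype.card_fin]
      · intro i
        have := congrFun h i
        rw [← hfiff v i, ← hfiff w i, this]
    have hbij : Function.Bijective f := by
      refine (Fintype.bijective_iff_injective_and_card f).2 ⟨hinj, ?_⟩
      simp [hcard, Fintype.card_fun]
    set e : V ≃ (Fin n → Bool) := Equiv.ofBijective f hbij with he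
    have hecoe : ∀ v, e v = f v := fun v => rfl
    have himage : ∀ (F : Finset V) (i : Fin n) (b : Bool),
        (∀ v, v ∈ F ↔ f v i = b) →
        F.image e = Finset.univ.filter (fun x => x i = b) := by
      intro F i b hpred
      ext x
      simp only [Finset.mem_image, Finset.mem_filter, Finset.mem_univ, true_and]
      constructor
      · rintro ⟨v, hv, rfl⟩
        rw [hecoe]
        exact (hpred v).1 hv
      · intro hx
        refine ⟨e.symm x, ?_, e.apply_symm_apply x⟩
        refine (hpred _).2 ?_
        have : f (e.symm x) = x := e.apply_symm_apply x
        rw [this]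
        exact hx
    refine ⟨e, fun F => ⟨?_, ?_⟩⟩
    · intro hF
      obtain ⟨v1, hv1⟩ := P.facet_nonempty F hF
      have hF1 : F = P.Fc hc v1 (c F) := P.eq_Fc' hc hF hv1
      by_cases hv0m : v1 ∈ P.Fc hc v0 (c F)
      · refine ⟨c F, false, himage F (c F) false ?_⟩
        intro v
        have hFe : F = P.Fc hc v0 (c F) := hF1.trans (P.Fc_eq_of_mem hc hv0m).symm
        rw [hfiff v (c F)]
        exact Finset.ext_iff.1 hFe v
      · refine ⟨c F, true, himage F (c F) true ?_⟩
        intro v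
        have hFe : F = (P.Fc hc v0 (c F))ᶜ := hF1.trans (P.Fc_compl hc hcard v0 hv0m)
        rw [hfiff' v (c F)]
        simpa [Finset.mem_compl] using Finset.ext_iff.1 hFe v
    · rintro ⟨i, b, hFi⟩
      cases b with
      | false =>
        have h2 : (P.Fc hc v0 i).image e = Finset.univ.filter (fun x => x i = false) :=
          himage _ i false (fun v => (hfiff v i).symm)
        have : F = P.Fc hc v0 i :=
          Finset.image_injective e.injective (hFi.trans h2.symm)
        rw [this]
        exact P.Fc_mem_facets hc v0 i
      | true =>
        obtain ⟨w, hw⟩ := P.exists_notMem_Fc hc hcard v0 i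
        have h2 : (P.Fc hc w i).image e = Finset.univ.filter (fun x => x i = true) := by
          refine himage _ i true (fun v => ?_)
          rw [hfiff' v i, P.Fc_compl hc hcard v0 hw, Finset.mem_compl]
        have : F = P.Fc hc w i :=
          Finset.image_injective e.injective (hFi.trans h2.symm)
        rw [this]
        exact P.Fc_mem_facets hc w i
  · -- backward: cube structure → card = 2^n
    rintro ⟨e, -⟩
    rw [Fintype.card_congr e]
    simp [Fintype.card_fun]
end
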